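/- Let E be a finite-dimensional real inner product space and f : E → ℝ differentiable, bounded below, whose gradient ∇f is Lipschitz continuous with constant M > 0. Let iterates q^{n+1} = q^n + β^n p^n be generated with nonzero directions p^n satisfying the descent condition ⟨g^n, p^n⟩ ≤ 0, where g^n = ∇f(q^n), and with step size β^n obtained by exact line search (β^n minimizes β ↦ f(q^n + β p^n) over ℝ). Then the Zoutendijk series converges: ∑_{n≥1} ⟨g^n, p^n⟩²/‖p^n‖² < ∞; equivalently, ∑_{n≥1} ‖g^n‖² cos²θ_n < ∞, where θ_n is the angle between p^n and -g^n. -/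

import Mathlib

open scoped RealInnerProductSpace

-- aux

lemma descent_lemma
    {E : Type*} [NormedAddCommGroup E] [InnerProductSpace ℝ E] [FiniteDimensional ℝ E]
    (f : E → ℝ) (hf : Differentiable ℝ f) (M : ℝ) (hM : 0 < M)
    (hLip : ∀ x y : E, ‖gradient f x - gradient f y‖ ≤ M * ‖x - y‖)
    (x v : E) :
    f (x + v) ≤ f x + ⟪gradient f x, v⟫ + M / 2 * ‖v‖ ^ 2 := by
  have hgc : Continuous (gradient f) := by
    refine (LipschitzWith.of_dist_le_mul (K := M.toNNReal) ?_).continuous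
    intro a b
    simpa [dist_eq_norm, Real.coe_toNNReal _ hM.le] using hLip a b
  set φ' : ℝ → ℝ := fun t => ⟪gradient f (x + t • v), v⟫ with hφ'
  have hderiv : ∀ t : ℝ, HasDerivAt (fun s : ℝ => f (x + s • v)) (φ' t) t := by
    intro t
    have hc : HasDerivAt (fun s : ℝ => x + s • v) v t := by
      simpa using ((hasDerivAt_id t).smul_const v).const_add x
    have hF : HasFDerivAt f
        (InnerProductSpace.toDual ℝ E (gradient f (x + t • v))) (x + t • v) :=
      ((hf (x + t • v)).hasGradientAt).hasFDerivAt
    simpa [φ', InnerProductSpace.toDual_apply_apply, Function.comp_def] using hF.comp_hasDerivAt t hc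
  have hcont : Continuous φ' := by
    apply Continuous.inner
    · exact hgc.comp (by continuity)
    · exact continuous_const
  have hint : f (x + v) - f x = ∫ t in (0:ℝ)..1, φ' t := by
    have := intervalIntegral.integral_eq_sub_of_hasDerivAt
      (f := fun s : ℝ => f (x + s • v)) (f' := φ')
      (fun t _ => hderiv t) (hcont.intervalIntegrable 0 1)
    simp at this
    linarith [this]
  have hbound : ∫ t in (0:ℝ)..1, φ' t ≤
      ∫ t in (0:ℝ)..1, (⟪gradient f x, v⟫ + M * t * ‖v‖ ^ 2) := by
    apply intervalIntegral.integral_mono_on (by norm_num)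
      (hcont.intervalIntegrable 0 1) (by apply Continuous.intervalIntegrable; continuity)
    intro t ht
    rcases ht with ⟨ht0, _⟩
    have h1 : φ' t - ⟪gradient f x, v⟫ = ⟪gradient f (x + t • v) - gradient f x, v⟫ := by
      simp [φ', inner_sub_left]
    have h2 : ⟪gradient f (x + t • v) - gradient f x, v⟫ ≤ M * t * ‖v‖ ^ 2 := by
      calc ⟪gradient f (x + t • v) - gradient f x, v⟫
          ≤ ‖gradient f (x + t • v) - gradient f x‖ * ‖v‖ := real_inner_le_norm _ _
        _ ≤ (M * ‖(x + t • v) - x‖) * ‖v‖ := by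
            gcongr; exact hLip _ _
        _ = M * t * ‖v‖ ^ 2 := by
            rw [add_sub_cancel_left, norm_smul, Real.norm_eq_abs, abs_of_nonneg ht0]; ring
    linarith
  have hval : ∫ t in (0:ℝ)..1, (⟪gradient f x, v⟫ + M * t * ‖v‖ ^ 2)
      = ⟪gradient f x, v⟫ + M / 2 * ‖v‖ ^ 2 := by
    rw [intervalIntegral.integral_add (by apply Continuous.intervalIntegrable; continuity)
      (by apply Continuous.intervalIntegrable; continuity)]
    simp [intervalIntegral.integral_const_mul, intervalIntegral.integral_mul_const,
      integral_id, mul_comm, mul_assoc]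
    ring
  linarith [hint ▸ (hbound.trans_eq hval)]

/-- Zoutendijk condition: if `f` is differentiable, bounded below,
with `M`-Lipschitz gradient, the directions `p^n ≠ 0` are descent directions
(`⟪g^n, p^n⟫ ≤ 0`), and the step sizes come from exact line search, then
`∑ ⟪g^n, p^n⟫²/‖p^n‖² < ∞`, equivalently `∑ ‖g^n‖² cos² θ_n < ∞` where `θ_n` is
the angle between `p^n` and `-g^n`. -/
theorem zoutendijk_condition
    {E : Type*} [NormedAddCommGroup E] [InnerProductSpace ℝ E] [FiniteDimensional ℝ E]
    (f : E → ℝ) (hf : Differentiable ℝ f)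
    (hbdd : BddBelow (Set.range f))
    (M : ℝ) (hM : 0 < M)
    (hLip : ∀ x y : E, ‖gradient f x - gradient f y‖ ≤ M * ‖x - y‖)
    (q p g : ℕ → E) (β : ℕ → ℝ)
    (hg : ∀ n, g n = gradient f (q n))
    (hq : ∀ n, q (n + 1) = q n + β n • p n)
    (hpne : ∀ n, p n ≠ 0)
    (hdesc : ∀ n, ⟪g n, p n⟫ ≤ 0)
    (hls : ∀ n, ∀ b : ℝ, f (q n + β n • p n) ≤ f (q n + b • p n)) :
    Summable (fun n => ⟪g n, p n⟫ ^ 2 / ‖p n‖ ^ 2) ∧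
      Summable (fun n =>
        ‖g n‖ ^ 2 * Real.cos (InnerProductGeometry.angle (p n) (-(g n))) ^ 2) := by
  set a : ℕ → ℝ := fun n => ⟪g n, p n⟫ ^ 2 / ‖p n‖ ^ 2 with ha
  have hanonneg : ∀ n, 0 ≤ a n := fun n =>
    div_nonneg (sq_nonneg _) (sq_nonneg _)
  have hPpos : ∀ n, (0:ℝ) < ‖p n‖ ^ 2 := fun n =>
    pow_pos (norm_pos_iff.mpr (hpne n)) 2
  -- sufficient decrease
  have hdec : ∀ n, f (q (n + 1)) ≤ f (q n) - a n / (2 * M) := by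
    intro n
    set b : ℝ := -⟪g n, p n⟫ / (M * ‖p n‖ ^ 2) with hb
    have h1 : f (q (n + 1)) ≤ f (q n + b • p n) := by
      rw [hq n]; exact hls n b
    have h2 : f (q n + b • p n) ≤
        f (q n) + ⟪gradient f (q n), b • p n⟫ + M / 2 * ‖b • p n‖ ^ 2 :=
      descent_lemma f hf M hM hLip (q n) (b • p n)
    have h3 : ⟪gradient f (q n), b • p n⟫ = b * ⟪g n, p n⟫ := by
      rw [← hg n, real_inner_smul_right]
    have h4 : ‖b • p n‖ ^ 2 = b ^ 2 * ‖p n‖ ^ 2 := by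
      rw [norm_smul]; rw [Real.norm_eq_abs]; rw [mul_pow, sq_abs]
    have h5 : b * ⟪g n, p n⟫ + M / 2 * (b ^ 2 * ‖p n‖ ^ 2)
        = -(a n / (2 * M)) := by
      rw [hb, ha]
      have hP := (hPpos n).ne'
      field_simp
      ring
    calc f (q (n + 1)) ≤ f (q n) + ⟪gradient f (q n), b • p n⟫ + M / 2 * ‖b • p n‖ ^ 2 :=
          h1.trans h2
      _ = f (q n) + (b * ⟪g n, p n⟫ + M / 2 * (b ^ 2 * ‖p n‖ ^ 2)) := by
          rw [h3, h4]; ring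
      _ = f (q n) - a n / (2 * M) := by rw [h5]; ring
  obtain ⟨C, hC⟩ := hbdd
  have hCle : ∀ x, C ≤ f x := fun x => hC (Set.mem_range_self x)
  have hsum : ∀ n : ℕ, ∑ k ∈ Finset.range n, a k ≤ 2 * M * (f (q 0) - C) := by
    intro n
    have key : ∀ n : ℕ, ∑ k ∈ Finset.range n, a k ≤ 2 * M * (f (q 0) - f (q n)) := by
      intro n
      induction n with
      | zero => simp
      | succ m ih =>
        rw [Finset.sum_range_succ]
        have := hdec m
        have h2M : (0:ℝ) < 2 * M := by linarith
        have hdiv : a m / (2 * M) ≤ f (q m) - f (q (m + 1)) := by linarith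
        have : a m ≤ 2 * M * (f (q m) - f (q (m + 1))) := by
          have := (div_le_iff₀ h2M).mp hdiv
          linarith
        linarith
    have := key n
    have := hCle (q n)
    nlinarith
  have hS1 : Summable a := summable_of_sum_range_le hanonneg hsum
  refine ⟨hS1, ?_⟩
  have heq : (fun n =>
      ‖g n‖ ^ 2 * Real.cos (InnerProductGeometry.angle (p n) (-(g n))) ^ 2) = a := by
    funext n
    rw [InnerProductGeometry.cos_angle]
    by_cases hgn : g n = 0
    · simp [ha, hgn]
    · have hgp : (0:ℝ) < ‖g n‖ := norm_pos_iff.mpr hgn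
      have hpp : (0:ℝ) < ‖p n‖ := norm_pos_iff.mpr (hpne n)
      rw [inner_neg_right, norm_neg, ha]
      rw [real_inner_comm]
      field_simp
  rw [heq]
  exact hS1
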